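/- Let (Δ, λ) be a labelled graph with λ: D(Δ) → ℕ. Then there exists an index function ι: V(Δ) → ℕ with λ(x)·ι(beg x) = λ(x⁻¹)·ι(end x) for all darts x if and only if λ*(C) = 1 for every closed walk C in Δ, where λ*(x_1,…,x_k) = ∏ λ(x_i)/λ(x_i⁻¹) ∈ ℚ. -/

import Mathlib

/-- A (multi)graph given by vertices, darts, a beginning map and a
dart-reversing involution. -/
structure MultiGraph where
  V : Type
  D : Type
  beg : D → V
  inv : D → D
  inv_invol : ∀ x, inv (inv x) = x

/-- The end of a dart. -/
def MultiGraph.endd (Δ : MultiGraph) (x : Δ.D) : Δ.V := Δ.beg (Δ.inv x)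

/-- `IsWalkFrom Δ l u v`: the list of darts `l` is a walk from `u` to `v`. -/
def MultiGraph.IsWalkFrom (Δ : MultiGraph) : List Δ.D → Δ.V → Δ.V → Prop
  | [], u, v => u = v
  | x :: l, u, v => Δ.beg x = u ∧ MultiGraph.IsWalkFrom Δ l (Δ.endd x) v

/-- λ*(W) = ∏ λ(x_i)/λ(x_i⁻¹) ∈ ℚ. -/
def lamStar (Δ : MultiGraph) (lam : Δ.D → ℕ) (l : List Δ.D) : ℚ :=
  (l.map fun x => (lam x : ℚ) / (lam (Δ.inv x) : ℚ)).prod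

lemma lamStar_nil (Δ : MultiGraph) (lam : Δ.D → ℕ) : lamStar Δ lam [] = 1 := by
  simp [lamStar]

lemma lamStar_cons (Δ : MultiGraph) (lam : Δ.D → ℕ) (x : Δ.D) (l : List Δ.D) :
    lamStar Δ lam (x :: l) = (lam x : ℚ) / (lam (Δ.inv x) : ℚ) * lamStar Δ lam l := by
  simp [lamStar]

lemma lamStar_append (Δ : MultiGraph) (lam : Δ.D → ℕ) (l l' : List Δ.D) :
    lamStar Δ lam (l ++ l') = lamStar Δ lam l * lamStar Δ lam l' := by
  simp [lamStar]

lemma lamStar_pos (Δ : MultiGraph) (lam : Δ.D → ℕ) (hlam : ∀ x, 0 < lam x) (l : List Δ.D) :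
    0 < lamStar Δ lam l := by
  induction l with
  | nil => simp [lamStar]
  | cons x l ih =>
    rw [lamStar_cons]
    exact mul_pos (div_pos (by exact_mod_cast hlam x) (by exact_mod_cast hlam _)) ih

lemma lamStar_reverse (Δ : MultiGraph) (lam : Δ.D → ℕ) (hlam : ∀ x, 0 < lam x) (l : List Δ.D) :
    lamStar Δ lam (l.reverse.map Δ.inv) = (lamStar Δ lam l)⁻¹ := by
  induction l with
  | nil => simp [lamStar]
  | cons x l ih =>
    rw [List.reverse_cons, List.map_append, lamStar_append, ih, lamStar_cons]
    simp only [List.map_cons, List.map_nil]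
    rw [show lamStar Δ lam [Δ.inv x] = (lam (Δ.inv x) : ℚ) / (lam x : ℚ) by
      simp [lamStar, Δ.inv_invol]]
    rw [mul_inv, inv_div, mul_comm]

lemma walk_append (Δ : MultiGraph) {l l' : List Δ.D} {u v w : Δ.V}
    (h : Δ.IsWalkFrom l u v) (h' : Δ.IsWalkFrom l' v w) :
    Δ.IsWalkFrom (l ++ l') u w := by
  induction l generalizing u with
  | nil => simp only [MultiGraph.IsWalkFrom] at h; subst h; exact h'
  | cons x l ih =>
    simp only [MultiGraph.IsWalkFrom] at h ⊢
    exact ⟨h.1, ih h.2⟩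

lemma walk_reverse (Δ : MultiGraph) {l : List Δ.D} {u v : Δ.V}
    (h : Δ.IsWalkFrom l u v) :
    Δ.IsWalkFrom (l.reverse.map Δ.inv) v u := by
  induction l generalizing u with
  | nil => simp only [MultiGraph.IsWalkFrom] at h ⊢; exact h.symm
  | cons x l ih =>
    simp only [MultiGraph.IsWalkFrom] at h
    obtain ⟨hb, hw⟩ := h
    have h2 : Δ.IsWalkFrom [Δ.inv x] (Δ.endd x) u := by
      refine ⟨rfl, ?_⟩
      simp only [MultiGraph.IsWalkFrom, MultiGraph.endd, Δ.inv_invol]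
      exact hb
    simpa using walk_append Δ (ih hw) h2

/-- A labelled finite connected graph (Δ,λ) is extendable
(admits an index function ι with λ(x)·ι(beg x) = λ(x⁻¹)·ι(end x) for all darts)
if and only if λ*(C) = 1 for every closed walk C of Δ. -/
theorem stmt_15 (Δ : MultiGraph) [Finite Δ.V] [Finite Δ.D] [Nonempty Δ.V]
    (lam : Δ.D → ℕ) (hlam : ∀ x, 0 < lam x)
    (hconn : ∀ u v : Δ.V, ∃ l : List Δ.D, Δ.IsWalkFrom l u v) :
    (∃ ι : Δ.V → ℕ, (∀ v, 0 < ι v) ∧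
        ∀ x : Δ.D, lam x * ι (Δ.beg x) = lam (Δ.inv x) * ι (Δ.endd x)) ↔
      (∀ (u : Δ.V) (l : List Δ.D), Δ.IsWalkFrom l u u → lamStar Δ lam l = 1) := by
  constructor
  · rintro ⟨ι, hιpos, hι⟩ u l hw
    -- generalized: for any walk from u to v, lamStar l * ι u = ι v
    have key : ∀ (l : List Δ.D) (u v : Δ.V), Δ.IsWalkFrom l u v →
        lamStar Δ lam l * (ι u : ℚ) = (ι v : ℚ) := by
      intro l
      induction l with
      | nil => intro u v h; simp only [MultiGraph.IsWalkFrom] at h; subst h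
               simp [lamStar_nil]
      | cons x l ih =>
        intro u v h
        obtain ⟨hb, hw⟩ := h
        subst hb
        have hstep : (lam x : ℚ) / (lam (Δ.inv x) : ℚ) * (ι (Δ.beg x) : ℚ)
            = (ι (Δ.endd x) : ℚ) := by
          have := hι x
          have hne : (lam (Δ.inv x) : ℚ) ≠ 0 := by
            exact_mod_cast (hlam (Δ.inv x)).ne'
          field_simp
          exact_mod_cast this
        rw [lamStar_cons, mul_assoc, mul_comm (lamStar Δ lam l), ← mul_assoc, hstep,
          mul_comm, ih _ _ hw]
    have h1 := key l u u hw
    have h2 : (ι u : ℚ) ≠ 0 := by exact_mod_cast (hιpos u).ne'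
    exact mul_right_cancel₀ h2 (by rw [h1, one_mul])
  · intro hclosed
    have := Fintype.ofFinite Δ.V
    obtain ⟨u0⟩ := ‹Nonempty Δ.V›
    set f : Δ.V → ℚ := fun v => lamStar Δ lam (Classical.choose (hconn u0 v)) with hf
    have hfw : ∀ v, Δ.IsWalkFrom (Classical.choose (hconn u0 v)) u0 v :=
      fun v => Classical.choose_spec (hconn u0 v)
    have hwd : ∀ (l : List Δ.D) (v : Δ.V), Δ.IsWalkFrom l u0 v → lamStar Δ lam l = f v := by
      intro l v h
      have hc := walk_append Δ h (walk_reverse Δ (hfw v))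
      have h1 := hclosed u0 _ hc
      rw [lamStar_append, lamStar_reverse Δ lam hlam] at h1
      have h2 : f v ≠ 0 := (lamStar_pos Δ lam hlam _).ne'
      rwa [mul_inv_eq_one₀ h2] at h1
    have hfpos : ∀ v, 0 < f v := fun v => lamStar_pos Δ lam hlam _
    have hstep : ∀ x : Δ.D, f (Δ.endd x)
        = f (Δ.beg x) * ((lam x : ℚ) / (lam (Δ.inv x) : ℚ)) := by
      intro x
      have hw : Δ.IsWalkFrom (Classical.choose (hconn u0 (Δ.beg x)) ++ [x]) u0 (Δ.endd x) := by
        refine walk_append Δ (hfw (Δ.beg x)) ?_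
        exact ⟨rfl, rfl⟩
      have := hwd _ _ hw
      rw [lamStar_append, lamStar_cons, lamStar_nil] at this
      rw [← this]
      ring
    set N : ℕ := ∏ v : Δ.V, (f v).den with hNdef
    have hNd : ∀ v, (f v).den ∣ N := fun v => Finset.dvd_prod_of_mem _ (Finset.mem_univ v)
    have hNpos : 0 < N := Finset.prod_pos (fun v _ => (f v).pos)
    refine ⟨fun v => N / (f v).den * (f v).num.toNat, ?_, ?_⟩
    · intro v
      have h1 : 0 < N / (f v).den := Nat.div_pos (Nat.le_of_dvd hNpos (hNd v)) (f v).pos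
      have h2 : 0 < (f v).num.toNat := by
        have := Rat.num_pos.mpr (hfpos v)
        omega
      exact Nat.mul_pos h1 h2
    · have hcast : ∀ v : Δ.V, ((N / (f v).den * (f v).num.toNat : ℕ) : ℚ) = N * f v := by
        intro v
        obtain ⟨m, hm⟩ := hNd v
        have hden : ((f v).den : ℚ) ≠ 0 := by exact_mod_cast (f v).pos.ne'
        have hnum : ((f v).num.toNat : ℚ) = ((f v).num : ℚ) := by
          have := Rat.num_pos.mpr (hfpos v)
          exact_mod_cast Int.toNat_of_nonneg this.le
        rw [hm, Nat.mul_div_cancel_left m (f v).pos]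
        push_cast [hnum]
        rw [show ((f v).num : ℚ) = f v * (f v).den from
          (div_eq_iff hden).mp (Rat.num_div_den (f v))]
        ring
      intro x
      have hne : (lam (Δ.inv x) : ℚ) ≠ 0 := by exact_mod_cast (hlam (Δ.inv x)).ne'
      have : (lam x : ℚ) * ((N : ℚ) * f (Δ.beg x))
          = (lam (Δ.inv x) : ℚ) * ((N : ℚ) * f (Δ.endd x)) := by
        rw [hstep x]; field_simp
      have h2 : ((lam x : ℚ)) * ((N / (f (Δ.beg x)).den * (f (Δ.beg x)).num.toNat : ℕ) : ℚ)
          = ((lam (Δ.inv x) : ℚ)) * ((N / (f (Δ.endd x)).den * (f (Δ.endd x)).num.toNat : ℕ) : ℚ) := by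
        rw [hcast, hcast]; exact this
      exact_mod_cast h2
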